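/- arXiv:1609.05313 — 5 statements merged into one kernel-verified Lean document; each statement's English description precedes it below -/
import Mathlib

section
/- Let m and l be positive integers with l ≤ m, let E be an m×l real matrix with rank(E) = l, let D be an m×m diagonal real matrix with strictly positive diagonal entries D_ii, and let f ∈ ℝᵐ, c ∈ ℝˡ. Then the vector b* = (Eᵗ D⁻¹ E)⁻¹ Eᵗ D⁻¹ f is the unique minimizer over b ∈ ℝˡ of the weighted least-squares error Q(b) = Σ_{i=1}^{m} D_ii⁻¹ · ((E b)_i − f_i)², and moreover cᵗ b* = aᵗ f where a = D⁻¹ E (Eᵗ D⁻¹ E)⁻¹ c. -/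
open Matrix

/-- Part (2) of Levin's theorem: for a full-column-rank matrix `E` and a
positive diagonal matrix `D`, the vector `b* = (Eᵀ D⁻¹ E)⁻¹ Eᵀ D⁻¹ f` is the
unique minimizer of the weighted least-squares error
`Q(b) = ∑ i, D ii⁻¹ ((E b) i − f i)²`, and `cᵀ b* = aᵀ f` where
`a = D⁻¹ E (Eᵀ D⁻¹ E)⁻¹ c`. -/
theorem levin_part2 (m l : ℕ) (hm : 0 < m) (hl : 0 < l) (hlm : l ≤ m)
    (E : Matrix (Fin m) (Fin l) ℝ) (hE : E.rank = l)
    (d : Fin m → ℝ) (hd : ∀ i, 0 < d i)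
    (f : Fin m → ℝ) (c : Fin l → ℝ)
    (D : Matrix (Fin m) (Fin m) ℝ) (hD : D = Matrix.diagonal d)
    (Q : (Fin l → ℝ) → ℝ)
    (hQ : Q = fun b => ∑ i, (d i)⁻¹ * ((E *ᵥ b) i - f i) ^ 2)
    (bstar : Fin l → ℝ)
    (hbstar : bstar = ((Eᵀ * D⁻¹ * E)⁻¹ * Eᵀ * D⁻¹) *ᵥ f)
    (a : Fin m → ℝ)
    (ha : a = (D⁻¹ * E * (Eᵀ * D⁻¹ * E)⁻¹) *ᵥ c) :
    (∀ b : Fin l → ℝ, b ≠ bstar → Q bstar < Q b) ∧ c ⬝ᵥ bstar = a ⬝ᵥ f := by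
  -- setup
  set w : Fin m → ℝ := fun i => (d i)⁻¹ with hw
  have hwpos : ∀ i, 0 < w i := fun i => inv_pos.2 (hd i)
  have hDinv : D⁻¹ = Matrix.diagonal w := by
    apply Matrix.inv_eq_right_inv
    rw [hD, Matrix.diagonal_mul_diagonal, ← Matrix.diagonal_one]
    refine congrArg Matrix.diagonal ?_
    funext i
    exact mul_inv_cancel₀ (hd i).ne'
  set W : Matrix (Fin m) (Fin m) ℝ := Matrix.diagonal w with hWdef
  set G : Matrix (Fin l) (Fin l) ℝ := Eᵀ * W * E with hG
  have hWsymm : Wᵀ = W := Matrix.diagonal_transpose w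
  have hGsymm : Gᵀ = G := by
    rw [hG, Matrix.transpose_mul, Matrix.transpose_mul, Matrix.transpose_transpose,
      hWsymm, Matrix.mul_assoc]
  -- key sum identity
  have hEW : ∀ (u : Fin l → ℝ) (s : Fin m → ℝ),
      u ⬝ᵥ ((Eᵀ * W) *ᵥ s) = ∑ i, w i * (E *ᵥ u) i * s i := by
    intro u s
    rw [Matrix.dotProduct_mulVec, ← Matrix.vecMul_vecMul, Matrix.vecMul_transpose]
    simp only [dotProduct, hWdef, Matrix.vecMul_diagonal]
    exact Finset.sum_congr rfl fun i _ => by ring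
  -- injectivity of E.mulVec
  have hinj : Function.Injective E.mulVec := by
    have h1 := LinearMap.finrank_range_add_finrank_ker E.mulVecLin
    rw [Module.finrank_pi] at h1
    have h2 : E.rank = Module.finrank ℝ (LinearMap.range E.mulVecLin) := rfl
    rw [← h2, hE, Fintype.card_fin] at h1
    have hker : LinearMap.ker E.mulVecLin = ⊥ :=
      Submodule.finrank_eq_zero.1 (by omega)
    have := LinearMap.ker_eq_bot.1 hker
    exact this
  -- quadratic form positivity
  have hquad : ∀ u : Fin l → ℝ, u ≠ 0 → 0 < ∑ i, w i * ((E *ᵥ u) i) ^ 2 := by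
    intro u hu
    have hEu : E *ᵥ u ≠ 0 := fun h => hu (hinj (by simpa using h))
    obtain ⟨i, hi⟩ := Function.ne_iff.1 hEu
    refine Finset.sum_pos' (fun j _ => ?_) ⟨i, Finset.mem_univ i, ?_⟩
    · have := (hwpos j).le
      positivity
    · have hi' : (E *ᵥ u) i ≠ 0 := by simpa using hi
      exact mul_pos (hwpos i) (by positivity)
  -- u ⬝ᵥ G u as a sum
  have hGform : ∀ u : Fin l → ℝ, u ⬝ᵥ (G *ᵥ u) = ∑ i, w i * ((E *ᵥ u) i) ^ 2 := by
    intro u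
    have : G *ᵥ u = (Eᵀ * W) *ᵥ (E *ᵥ u) := by
      rw [Matrix.mulVec_mulVec, ← hG]
    rw [this, hEW]
    exact Finset.sum_congr rfl fun i _ => by ring
  -- G is invertible
  have hGu : IsUnit G.det := by
    rw [← Matrix.isUnit_iff_isUnit_det, ← Matrix.mulVec_injective_iff_isUnit]
    intro u v huv
    by_contra hne
    have h0 : G *ᵥ (u - v) = 0 := by rw [Matrix.mulVec_sub, huv, sub_self]
    have hpos := hquad (u - v) (sub_ne_zero.2 hne)
    rw [← hGform, h0, dotProduct_zero] at hpos
    exact lt_irrefl 0 hpos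
  -- normal equation
  have hbstar' : bstar = (G⁻¹ * Eᵀ * W) *ᵥ f := by rw [hbstar, hDinv]
  have hnormal : G *ᵥ bstar = (Eᵀ * W) *ᵥ f := by
    rw [hbstar', Matrix.mulVec_mulVec, ← Matrix.mul_assoc, ← Matrix.mul_assoc,
      Matrix.mul_nonsing_inv _ hGu, Matrix.one_mul]
  -- cross term vanishes
  have hcross : ∀ u : Fin l → ℝ,
      ∑ i, w i * (E *ᵥ u) i * ((E *ᵥ bstar) i - f i) = 0 := by
    intro u
    have key : (Eᵀ * W) *ᵥ (E *ᵥ bstar - f) = 0 := by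
      rw [Matrix.mulVec_sub, Matrix.mulVec_mulVec, ← hG, hnormal, sub_self]
    have h := hEW u (E *ᵥ bstar - f)
    rw [key] at h
    simp only [dotProduct_zero, Pi.sub_apply] at h
    exact h.symm
  constructor
  · intro b hb
    have hu : b - bstar ≠ 0 := sub_ne_zero.2 hb
    have hdiff : Q b - Q bstar = (∑ i, w i * ((E *ᵥ (b - bstar)) i) ^ 2) +
        2 * ∑ i, w i * (E *ᵥ (b - bstar)) i * ((E *ᵥ bstar) i - f i) := by
      rw [hQ]
      simp only
      rw [← Finset.sum_sub_distrib, Finset.mul_sum, ← Finset.sum_add_distrib]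
      apply Finset.sum_congr rfl
      intro i _
      have hsplit : E *ᵥ b = E *ᵥ bstar + E *ᵥ (b - bstar) := by
        have hb' : bstar + (b - bstar) = b := by abel
        rw [← Matrix.mulVec_add, hb']
      rw [hsplit, Pi.add_apply]
      ring
    rw [hcross (b - bstar)] at hdiff
    have hpos := hquad (b - bstar) hu
    linarith
  · have hA : a = (W * E * G⁻¹) *ᵥ c := by rw [ha, hDinv]
    have hMt : (W * E * G⁻¹)ᵀ = G⁻¹ * Eᵀ * W := by
      rw [Matrix.transpose_mul, Matrix.transpose_mul, Matrix.transpose_nonsing_inv,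
        hGsymm, hWsymm, Matrix.mul_assoc]
    calc c ⬝ᵥ bstar = c ⬝ᵥ ((W * E * G⁻¹)ᵀ *ᵥ f) := by rw [hbstar', hMt]
      _ = ((W * E * G⁻¹) *ᵥ c) ⬝ᵥ f := by
          rw [Matrix.dotProduct_mulVec, Matrix.vecMul_transpose]
      _ = a ⬝ᵥ f := by rw [hA]
end

section
/- Let n ≥ 0 and j ≥ 1 be integers with j ≤ n + 1. Then for every real t with j − 1 ≤ t < n + 1, the uniform B-spline basis functions satisfy the partition of unity identity Σ_{i=0}^{n} B_{i,j}(t) = 1. -/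
/-- Uniform B-spline basis functions `B i j` with integer knots `tᵢ = i`,
defined by the Cox–de Boor recursion. -/
noncomputable def B : ℕ → ℕ → ℝ → ℝ
  | _, 0, _ => 0
  | i, 1, t => if (i : ℝ) ≤ t ∧ t < (i : ℝ) + 1 then 1 else 0
  | i, (j+2), t =>
      ((t - (i : ℝ)) / ((j : ℝ) + 1)) * B i (j+1) t
        + (((i : ℝ) + ((j : ℝ) + 2) - t) / ((j : ℝ) + 1)) * B (i+1) (j+1) t

lemma B_zero_of_lt (j : ℕ) : ∀ (i : ℕ) (t : ℝ), t < (i : ℝ) → B i j t = 0 := by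
  induction j with
  | zero => intro i t _; simp [B]
  | succ j ih =>
    intro i t ht
    cases j with
    | zero =>
      simp only [B, ite_eq_right_iff]
      rintro ⟨h, _⟩; linarith
    | succ m =>
      have h1 : B i (m+1) t = 0 := ih i t ht
      have h2 : B (i+1) (m+1) t = 0 := ih (i+1) t (by push_cast; linarith)
      simp [B, h1, h2]

lemma B_zero_of_ge (j : ℕ) : ∀ (i : ℕ) (t : ℝ), (i : ℝ) + j ≤ t → B i j t = 0 := by
  induction j with
  | zero => intro i t _; simp [B]
  | succ j ih =>
    intro i t ht
    push_cast at ht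
    cases j with
    | zero =>
      simp only [B, ite_eq_right_iff]
      rintro ⟨_, h⟩; linarith
    | succ m =>
      have h1 : B i (m+1) t = 0 := ih i t (by push_cast; push_cast at ht; linarith)
      have h2 : B (i+1) (m+1) t = 0 := ih (i+1) t (by push_cast; push_cast at ht; linarith)
      simp [B, h1, h2]

/-- (BS-3): partition of unity for uniform B-spline basis functions. -/
theorem bspline_partition_of_unity (n j : ℕ) (hj : 1 ≤ j) (hjn : j ≤ n + 1)
    (t : ℝ) (h1 : (j : ℝ) - 1 ≤ t) (h2 : t < (n : ℝ) + 1) :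
    ∑ i ∈ Finset.range (n + 1), B i j t = 1 := by
  revert hjn h1
  induction j, hj using Nat.le_induction with
  | base =>
    intro hjn h1
    norm_num at h1
    set k := Nat.floor t with hk
    have hkt : (k : ℝ) ≤ t := Nat.floor_le h1
    have htk : t < (k : ℝ) + 1 := Nat.lt_floor_add_one t
    have hkn : k < n + 1 := by
      have := (Nat.floor_lt h1).mpr (by exact_mod_cast h2)
      omega
    rw [Finset.sum_eq_single_of_mem k (Finset.mem_range.mpr hkn)]
    · simp only [B]
      rw [if_pos ⟨hkt, htk⟩]
    · intro i _ hik
      simp only [B, ite_eq_right_iff]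
      rintro ⟨ha, hb⟩
      have : i = k := by
        have h1' : (i : ℝ) < (k:ℝ) + 1 := lt_of_le_of_lt ha htk
        have h2' : (k : ℝ) < (i:ℝ) + 1 := lt_of_le_of_lt hkt hb
        have : i < k + 1 := by exact_mod_cast h1'
        have : k < i + 1 := by exact_mod_cast h2'
        omega
      exact absurd this hik
  | succ jj hjj ih =>
    intro hjn h1
    obtain ⟨m, rfl⟩ : ∃ m, jj = m + 1 := ⟨jj - 1, by omega⟩
    push_cast at h1
    have htm : ((m : ℝ)) + 1 ≤ t := by linarith
    have hB0 : B 0 (m+1) t = 0 := B_zero_of_ge (m+1) 0 t (by push_cast; linarith)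
    have hBn : B (n+1) (m+1) t = 0 := B_zero_of_lt (m+1) (n+1) t (by push_cast; linarith)
    have ihs : ∑ i ∈ Finset.range (n + 1), B i (m+1) t = 1 :=
      ih (by omega) (by push_cast; linarith)
    simp only [B]
    rw [Finset.sum_add_distrib]
    have hshift :
        ∑ i ∈ Finset.range (n + 1),
          (((i:ℝ) + ((m:ℝ) + 2) - t) / ((m:ℝ) + 1)) * B (i+1) (m+1) t
        = ∑ i ∈ Finset.range (n + 1),
            (((i:ℝ) + ((m:ℝ) + 1) - t) / ((m:ℝ) + 1)) * B i (m+1) t := by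
      have := Finset.sum_range_succ'
        (fun k => (((k:ℝ) + ((m:ℝ) + 1) - t) / ((m:ℝ) + 1)) * B k (m+1) t) (n+1)
      rw [Finset.sum_range_succ
        (fun k => (((k:ℝ) + ((m:ℝ) + 1) - t) / ((m:ℝ) + 1)) * B k (m+1) t) (n+1)] at this
      simp only [hB0, hBn, mul_zero, add_zero, Nat.cast_zero, zero_add] at this
      have heq : ∀ i ∈ Finset.range (n+1),
          (((i:ℝ) + ((m:ℝ) + 2) - t) / ((m:ℝ) + 1)) * B (i+1) (m+1) t
          = ((((i+1 : ℕ):ℝ) + ((m:ℝ) + 1) - t) / ((m:ℝ) + 1)) * B (i+1) (m+1) t := by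
        intro i _
        push_cast
        ring_nf
      rw [Finset.sum_congr rfl heq, ← this]
    rw [hshift, ← Finset.sum_add_distrib]
    have hm1 : ((m:ℝ) + 1) ≠ 0 := by positivity
    calc ∑ i ∈ Finset.range (n + 1),
          ((t - (i:ℝ)) / ((m:ℝ) + 1) * B i (m+1) t
            + (((i:ℝ) + ((m:ℝ) + 1) - t) / ((m:ℝ) + 1)) * B i (m+1) t)
        = ∑ i ∈ Finset.range (n + 1), B i (m+1) t := by
          apply Finset.sum_congr rfl
          intro i _
          field_simp
          ring
      _ = 1 := ihs
end

section
/- For all integers i ≥ 0 and j ≥ 2, the uniform B-spline basis function B_{i,j} : ℝ → ℝ is (j − 2)-times continuously differentiable on ℝ (in particular, for j = 2 it is continuous, and the cubic basis function B_{i,4} is of class C²). -/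
lemma B_zero (i : ℕ) (t : ℝ) : B i 0 t = 0 := rfl
lemma B_one (i : ℕ) (t : ℝ) : B i 1 t = if (i : ℝ) ≤ t ∧ t < (i : ℝ) + 1 then 1 else 0 := rfl
lemma B_rec (i j : ℕ) (t : ℝ) : B i (j+2) t =
    ((t - (i : ℝ)) / ((j : ℝ) + 1)) * B i (j+1) t
      + (((i : ℝ) + ((j : ℝ) + 2) - t) / ((j : ℝ) + 1)) * B (i+1) (j+1) t := rfl

lemma key (j i : ℕ) (t : ℝ) :
    (j : ℝ) * (B i (j+1) t - B (i+1) (j+1) t)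
      = (t - i) * (B i j t - B (i+1) j t)
        + ((i : ℝ) + (j : ℝ) + 2 - t) * (B (i+1) j t - B (i+2) j t) := by
  cases j with
  | zero => simp [B_zero]
  | succ k =>
      have hk : ((k : ℝ) + 1) ≠ 0 := by positivity
      rw [show k + 1 + 1 = k + 2 from rfl, B_rec i k t, B_rec (i+1) k t]
      push_cast
      field_simp
      ring

open Set Filter

lemma deriv_off (j : ℕ) : ∀ (i : ℕ) (t : ℝ), (∀ n : ℤ, t ≠ n) →
    HasDerivAt (B i (j+1)) (B i j t - B (i+1) j t) t := by
  induction j with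
  | zero =>
      intro i t ht
      have h0 : B i 0 t - B (i+1) 0 t = 0 := by simp [B_zero]
      rw [h0]
      by_cases h : (i : ℝ) ≤ t ∧ t < (i : ℝ) + 1
      · have hlt : (i : ℝ) < t := lt_of_le_of_ne h.1 (fun he => ht i he.symm)
        have hlt2 : t < (i : ℝ) + 1 := h.2
        have hev : B i 1 =ᶠ[nhds t] fun _ => (1 : ℝ) := by
          filter_upwards [Ioo_mem_nhds hlt hlt2] with s hs
          simp [B_one, hs.1.le, hs.2]
        exact (hasDerivAt_const t (1:ℝ)).congr_of_eventuallyEq hev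
      · push_neg at h
        rcases lt_or_ge t (i : ℝ) with hlt | hge
        · have hev : B i 1 =ᶠ[nhds t] fun _ => (0 : ℝ) := by
            filter_upwards [Iio_mem_nhds hlt] with s hs
            rw [B_one, if_neg (by rintro ⟨a1, a2⟩; exact absurd a1 (not_le.2 hs))]
          exact (hasDerivAt_const t (0:ℝ)).congr_of_eventuallyEq hev
        · have hge' : (i : ℝ) + 1 < t := by
            rcases lt_or_eq_of_le (h hge) with h1 | h1
            · exact h1
            · exact absurd h1.symm (by exact_mod_cast ht (i+1))
          have hev : B i 1 =ᶠ[nhds t] fun _ => (0 : ℝ) := by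
            filter_upwards [Ioi_mem_nhds hge'] with s hs
            have hs' : (i:ℝ) + 1 < s := hs
            rw [B_one, if_neg (by rintro ⟨a1, a2⟩; linarith)]
          exact (hasDerivAt_const t (0:ℝ)).congr_of_eventuallyEq hev
  | succ j IH =>
      intro i t ht
      have h1 := IH i t ht
      have h2 := IH (i+1) t ht
      have ha : HasDerivAt (fun s => (s - (i:ℝ)) / ((j:ℝ)+1)) (1/((j:ℝ)+1)) t :=
        ((hasDerivAt_id t).sub_const _).div_const _
      have hb : HasDerivAt (fun s => ((i:ℝ) + ((j:ℝ)+2) - s) / ((j:ℝ)+1)) (-1/((j:ℝ)+1)) t := by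
        have := ((hasDerivAt_id t).const_sub ((i:ℝ) + ((j:ℝ)+2))).div_const ((j:ℝ)+1)
        simpa using this
      have hD := (ha.mul h1).add (hb.mul h2)
      have heq : (fun s => (s - (i:ℝ)) / ((j:ℝ)+1) * B i (j+1) s
          + ((i:ℝ) + ((j:ℝ)+2) - s) / ((j:ℝ)+1) * B (i+1) (j+1) s) = B i (j+2) := by
        funext s; rw [B_rec]
      rw [show ((fun s => (s - (i:ℝ)) / ((j:ℝ)+1)) * B i (j+1) + (fun s => ((i:ℝ) + ((j:ℝ)+2) - s) / ((j:ℝ)+1)) * B (i+1) (j+1)) = B i (j+2) from heq] at hD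
      refine hD.congr_deriv (Eq.symm ?_)
      have hk := key j i t
      have hne : ((j:ℝ)+1) ≠ 0 := by positivity
      push_cast at hk ⊢
      field_simp
      linear_combination hk

lemma B_two_eq (i : ℕ) (t : ℝ) : B i 2 t = max 0 (1 - |t - ((i:ℝ) + 1)|) := by
  have h : B i 2 t = (t - (i:ℝ)) * B i 1 t + ((i:ℝ) + 2 - t) * B (i+1) 1 t := by
    rw [show (2:ℕ) = 0 + 2 from rfl, B_rec]; push_cast; ring_nf
  rw [h, B_one, B_one]
  push_cast
  by_cases h1 : (i:ℝ) ≤ t ∧ t < (i:ℝ) + 1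
  · rw [if_pos h1, if_neg (by rintro ⟨a, _⟩; exact absurd h1.2 (not_lt.2 a))]
    obtain ⟨a1, a2⟩ := h1
    rw [abs_of_nonpos (by linarith), max_eq_right (by linarith)]; ring
  · by_cases h2 : (i:ℝ) + 1 ≤ t ∧ t < (i:ℝ) + 1 + 1
    · rw [if_neg h1, if_pos h2]
      obtain ⟨a1, a2⟩ := h2
      rw [abs_of_nonneg (by linarith), max_eq_right (by linarith)]; ring
    · rw [if_neg h1, if_neg h2]
      push_neg at h1 h2
      have hle : 1 - |t - ((i:ℝ) + 1)| ≤ 0 := by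
        rcases le_or_gt ((i:ℝ)) t with hh | hh
        · have b1 := h1 hh; have b2 := h2 b1
          rw [abs_of_nonneg (by linarith)]; linarith
        · rw [abs_of_nonpos (by linarith)]; linarith
      rw [max_eq_left hle]; ring

lemma contB : ∀ (j i : ℕ), Continuous (B i (j+2)) := by
  intro j
  induction j with
  | zero =>
      intro i
      have : B i 2 = fun t => max 0 (1 - |t - ((i:ℝ) + 1)|) := funext (B_two_eq i)
      rw [this]
      fun_prop
  | succ j IH =>
      intro i
      have : B i (j+3) = fun t => ((t - (i:ℝ)) / ((j:ℝ)+2)) * B i (j+2) t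
          + (((i:ℝ) + ((j:ℝ)+3) - t) / ((j:ℝ)+2)) * B (i+1) (j+2) t := by
        funext t
        rw [show j + 3 = (j+1) + 2 from rfl, B_rec]
        push_cast; ring_nf
      rw [this]
      exact (((continuous_id.sub continuous_const).div_const _).mul (IH i)).add
        (((continuous_const.sub continuous_id).div_const _).mul (IH (i+1)))

lemma hasDerivAt_of_ne_nbhd {f g : ℝ → ℝ} {x : ℝ}
    (hd : ∀ y ∈ Ioo (x-1) (x+1), y ≠ x → HasDerivAt f (g y) y)
    (hf : Continuous f) (hg : Continuous g) : HasDerivAt f (g x) x := by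
  have hA : HasDerivWithinAt f (g x) (Ici x) x := by
    apply hasDerivWithinAt_Ici_of_tendsto_deriv (s := Ioo x (x+1))
    · intro y hy
      exact (hd y ⟨by linarith [hy.1], hy.2⟩ (ne_of_gt hy.1)).differentiableAt.differentiableWithinAt
    · exact hf.continuousWithinAt
    · exact Ioo_mem_nhdsGT_of_mem ⟨le_refl x, by linarith⟩
    · refine Tendsto.congr' ?_ ((hg.tendsto x).mono_left nhdsWithin_le_nhds)
      filter_upwards [Ioo_mem_nhdsGT_of_mem (⟨le_refl x, by linarith⟩ : x ∈ Ico x (x+1))]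
        with y hy
      exact ((hd y ⟨by linarith [hy.1], hy.2⟩ (ne_of_gt hy.1)).deriv).symm
  have hB : HasDerivWithinAt f (g x) (Iic x) x := by
    apply hasDerivWithinAt_Iic_of_tendsto_deriv (s := Ioo (x-1) x)
    · intro y hy
      exact (hd y ⟨hy.1, by linarith [hy.2]⟩ (ne_of_lt hy.2)).differentiableAt.differentiableWithinAt
    · exact hf.continuousWithinAt
    · exact Ioo_mem_nhdsLT_of_mem ⟨by linarith, le_refl x⟩
    · refine Tendsto.congr' ?_ ((hg.tendsto x).mono_left nhdsWithin_le_nhds)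
      filter_upwards [Ioo_mem_nhdsLT_of_mem (⟨by linarith, le_refl x⟩ : x ∈ Ioc (x-1) x)]
        with y hy
      exact ((hd y ⟨hy.1, by linarith [hy.2]⟩ (ne_of_lt hy.2)).deriv).symm
  simpa using hB.union hA

lemma derivAll (j i : ℕ) (t : ℝ) :
    HasDerivAt (B i (j+3)) (B i (j+2) t - B (i+1) (j+2) t) t := by
  by_cases ht : ∀ n : ℤ, t ≠ n
  · exact deriv_off (j+2) i t ht
  · push_neg at ht
    obtain ⟨n, rfl⟩ := ht
    have := hasDerivAt_of_ne_nbhd (f := B i (j+3))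
      (g := fun s => B i (j+2) s - B (i+1) (j+2) s) (x := (n:ℝ)) ?_ ?_ ?_
    · exact this
    · intro y hy hne
      apply deriv_off (j+2) i y
      intro m hm
      apply hne
      subst hm
      have h1 : (n:ℝ) - 1 < (m:ℝ) := hy.1
      have h2 : (m:ℝ) < (n:ℝ) + 1 := hy.2
      have : m = n := by
        have b1 : n - 1 < m := by exact_mod_cast h1
        have b2 : m < n + 1 := by exact_mod_cast h2
        omega
      exact_mod_cast congrArg (Int.cast : ℤ → ℝ) this
    · exact contB (j+1) i
    · exact (contB j i).sub (contB j (i+1))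

lemma smoothB : ∀ (k i : ℕ), ContDiff ℝ (k : ℕ) (B i (k+2)) := by
  intro k
  induction k with
  | zero => intro i; exact contDiff_zero.2 (contB 0 i)
  | succ k IH =>
      intro i
      suffices h : ContDiff ℝ ((k : ℕ∞) + 1) (B i (k+3)) by
        exact_mod_cast h
      rw [contDiff_succ_iff_deriv]
      refine ⟨fun t => (derivAll k i t).differentiableAt, fun h => absurd h (by simp), ?_⟩
      have hd : deriv (B i (k+3)) = fun t => B i (k+2) t - B (i+1) (k+2) t :=
        funext fun t => (derivAll k i t).deriv
      rw [hd]
      exact (IH i).sub (IH (i+1))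

/-- (BS-4): for `j ≥ 2`, the uniform B-spline basis function `B i j` is
`(j − 2)`-times continuously differentiable on all of `ℝ`. -/
theorem bspline_smoothness (i j : ℕ) (hj : 2 ≤ j) :
    ContDiff ℝ (j - 2 : ℕ) (B i j) := by
  obtain ⟨k, rfl⟩ := Nat.exists_eq_add_of_le hj
  have : 2 + k - 2 = k := by omega
  rw [this, show 2 + k = k + 2 by omega]
  exact smoothB k i
end

section
/- Let n ≥ 3 be an integer and f : ℝ → ℝ any function. For every real x with 1 < x < n − 1, the function p ↦ Σ_{i=0}^{n+4} W(x − i)·(p − f(i))² of the real variable p has a unique minimizer p* ∈ ℝ, and p* = Σ_{i=0}^{n} B_{i,4}(x + 2)·f(i); that is, the graph of the moving least-squares approximation of order l = 1 with weight function W for the data {(i, f(i)) : i = 0,…,n+4} coincides with the cubic uniform B-spline curve γ(t) = Σ_{i=0}^{n} B_{i,4}(t)·(i, f(i)) (whose first coordinate is t − 2). -/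
/-- The piecewise-cubic weight function. -/
noncomputable def W (x : ℝ) : ℝ :=
  if x < -2 then 0
  else if x < -1 then (1/6) * (x + 2)^3
  else if x < 0 then -(1/2) * x^3 - x^2 + 2/3
  else if x < 1 then (1/2) * x^3 - x^2 + 2/3
  else if x < 2 then -(1/6) * (x - 2)^3
  else 0

lemma W_zero_le (y : ℝ) (h : y ≤ -2) : W y = 0 := by
  unfold W; split_ifs with h1 h2 <;> try rfl
  · have : y = -2 := le_antisymm h (not_lt.mp h1)
    subst this; norm_num
  all_goals exfalso; push_neg at *; linarith

lemma W_zero_ge (y : ℝ) (h : 2 ≤ y) : W y = 0 := by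
  unfold W; split_ifs <;> first | rfl | (exfalso; linarith)

lemma Wsum4 (u : ℝ) (h0 : 0 ≤ u) (h1 : u < 1) :
    W (u+1) + W u + W (u-1) + W (u-2) = 1 := by
  have e1 : W (u+1) = -(1/6) * (u+1-2)^3 := by
    unfold W
    rw [if_neg (by linarith), if_neg (by linarith), if_neg (by linarith),
        if_neg (by linarith), if_pos (by linarith)]
  have e2 : W u = (1/2) * u^3 - u^2 + 2/3 := by
    unfold W
    rw [if_neg (by linarith), if_neg (by linarith), if_neg (by linarith),
        if_pos (by linarith)]
  have e3 : W (u-1) = -(1/2) * (u-1)^3 - (u-1)^2 + 2/3 := by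
    unfold W
    rw [if_neg (by linarith), if_neg (by linarith), if_pos (by linarith)]
  have e4 : W (u-2) = (1/6) * (u-2+2)^3 := by
    unfold W
    rw [if_neg (by linarith), if_pos (by linarith)]
  rw [e1, e2, e3, e4]; ring

lemma B4 (i : ℕ) (t : ℝ) : B i 4 t = W (t - i - 2) := by
  have c1 : ((i+1 : ℕ) : ℝ) = (i:ℝ) + 1 := by push_cast; ring
  have c2 : ((i+2 : ℕ) : ℝ) = (i:ℝ) + 2 := by push_cast; ring
  have c3 : ((i+3 : ℕ) : ℝ) = (i:ℝ) + 3 := by push_cast; ring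
  simp only [B, c1, c2, c3]
  norm_num
  unfold W
  rcases lt_or_ge t i with h | h
  · simp only [if_neg (show ¬((i:ℝ) ≤ t ∧ t < (i:ℝ)+1) by push_neg; intro; linarith),
      if_neg (show ¬((i:ℝ)+1 ≤ t ∧ t < (i:ℝ)+1+1) by push_neg; intro; linarith),
      if_neg (show ¬((i:ℝ)+2 ≤ t ∧ t < (i:ℝ)+2+1) by push_neg; intro; linarith),
      if_neg (show ¬((i:ℝ)+3 ≤ t ∧ t < (i:ℝ)+3+1) by push_neg; intro; linarith),
      if_pos (show t - (i:ℝ) - 2 < -2 by linarith)]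
    ring
  rcases lt_or_ge t ((i:ℝ)+1) with h' | h2
  · simp only [if_pos (⟨h, h'⟩ : (i:ℝ) ≤ t ∧ t < (i:ℝ)+1),
      if_neg (show ¬((i:ℝ)+1 ≤ t ∧ t < (i:ℝ)+1+1) by push_neg; intro; linarith),
      if_neg (show ¬((i:ℝ)+2 ≤ t ∧ t < (i:ℝ)+2+1) by push_neg; intro; linarith),
      if_neg (show ¬((i:ℝ)+3 ≤ t ∧ t < (i:ℝ)+3+1) by push_neg; intro; linarith),
      if_neg (show ¬(t - (i:ℝ) - 2 < -2) by push_neg; linarith),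
      if_pos (show t - (i:ℝ) - 2 < -1 by linarith)]
    ring
  rcases lt_or_ge t ((i:ℝ)+2) with h' | h3
  · simp only [if_pos (⟨h2, by linarith⟩ : (i:ℝ)+1 ≤ t ∧ t < (i:ℝ)+1+1),
      if_neg (show ¬((i:ℝ) ≤ t ∧ t < (i:ℝ)+1) by push_neg; intro; linarith),
      if_neg (show ¬((i:ℝ)+2 ≤ t ∧ t < (i:ℝ)+2+1) by push_neg; intro; linarith),
      if_neg (show ¬((i:ℝ)+3 ≤ t ∧ t < (i:ℝ)+3+1) by push_neg; intro; linarith),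
      if_neg (show ¬(t - (i:ℝ) - 2 < -2) by push_neg; linarith),
      if_neg (show ¬(t - (i:ℝ) - 2 < -1) by push_neg; linarith),
      if_pos (show t - (i:ℝ) - 2 < 0 by linarith)]
    ring
  rcases lt_or_ge t ((i:ℝ)+3) with h' | h4
  · simp only [if_pos (⟨h3, by linarith⟩ : (i:ℝ)+2 ≤ t ∧ t < (i:ℝ)+2+1),
      if_neg (show ¬((i:ℝ) ≤ t ∧ t < (i:ℝ)+1) by push_neg; intro; linarith),
      if_neg (show ¬((i:ℝ)+1 ≤ t ∧ t < (i:ℝ)+1+1) by push_neg; intro; linarith),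
      if_neg (show ¬((i:ℝ)+3 ≤ t ∧ t < (i:ℝ)+3+1) by push_neg; intro; linarith),
      if_neg (show ¬(t - (i:ℝ) - 2 < -2) by push_neg; linarith),
      if_neg (show ¬(t - (i:ℝ) - 2 < -1) by push_neg; linarith),
      if_neg (show ¬(t - (i:ℝ) - 2 < 0) by push_neg; linarith),
      if_pos (show t - (i:ℝ) - 2 < 1 by linarith)]
    ring
  rcases lt_or_ge t ((i:ℝ)+4) with h' | h5
  · simp only [if_pos (⟨h4, by linarith⟩ : (i:ℝ)+3 ≤ t ∧ t < (i:ℝ)+3+1),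
      if_neg (show ¬((i:ℝ) ≤ t ∧ t < (i:ℝ)+1) by push_neg; intro; linarith),
      if_neg (show ¬((i:ℝ)+1 ≤ t ∧ t < (i:ℝ)+1+1) by push_neg; intro; linarith),
      if_neg (show ¬((i:ℝ)+2 ≤ t ∧ t < (i:ℝ)+2+1) by push_neg; intro; linarith),
      if_neg (show ¬(t - (i:ℝ) - 2 < -2) by push_neg; linarith),
      if_neg (show ¬(t - (i:ℝ) - 2 < -1) by push_neg; linarith),
      if_neg (show ¬(t - (i:ℝ) - 2 < 0) by push_neg; linarith),
      if_neg (show ¬(t - (i:ℝ) - 2 < 1) by push_neg; linarith),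
      if_pos (show t - (i:ℝ) - 2 < 2 by linarith)]
    ring
  · simp only [if_neg (show ¬((i:ℝ) ≤ t ∧ t < (i:ℝ)+1) by push_neg; intro; linarith),
      if_neg (show ¬((i:ℝ)+1 ≤ t ∧ t < (i:ℝ)+1+1) by push_neg; intro; linarith),
      if_neg (show ¬((i:ℝ)+2 ≤ t ∧ t < (i:ℝ)+2+1) by push_neg; intro; linarith),
      if_neg (show ¬((i:ℝ)+3 ≤ t ∧ t < (i:ℝ)+3+1) by push_neg; intro; linarith),
      if_neg (show ¬(t - (i:ℝ) - 2 < -2) by push_neg; linarith),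
      if_neg (show ¬(t - (i:ℝ) - 2 < -1) by push_neg; linarith),
      if_neg (show ¬(t - (i:ℝ) - 2 < 0) by push_neg; linarith),
      if_neg (show ¬(t - (i:ℝ) - 2 < 1) by push_neg; linarith),
      if_neg (show ¬(t - (i:ℝ) - 2 < 2) by push_neg; linarith)]
    ring

lemma sumW (x : ℝ) (hx : 1 < x) :
    ∀ m : ℕ, x < (m:ℝ) + 2 → ∑ i ∈ Finset.range (m+5), W (x - i) = 1 := by
  intro m
  induction m with
  | zero =>
      intro hm
      norm_num at hm
      rw [show (0:ℕ)+5 = 5 from rfl]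
      simp [Finset.sum_range_succ]
      have key := Wsum4 (x-1) (by linarith) (by linarith)
      have h4 : W (x-4) = 0 := W_zero_le _ (by linarith)
      norm_num at key ⊢
      ring_nf at key h4 ⊢
      linarith [key, h4]
  | succ m ih =>
      intro hm
      rcases lt_or_ge x ((m:ℝ)+2) with h | h
      · rw [show m+1+5 = (m+5)+1 from rfl, Finset.sum_range_succ, ih h,
            W_zero_le _ (by push_cast; linarith)]
        ring
      · have hz : ∑ i ∈ Finset.range (m+1), W (x - i) = 0 := by
          apply Finset.sum_eq_zero
          intro i hi
          apply W_zero_ge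
          have : (i:ℝ) ≤ m := by exact_mod_cast Nat.lt_succ_iff.mp (Finset.mem_range.mp hi)
          linarith
        have hm' : x < (m:ℝ) + 3 := by push_cast at hm; linarith
        rw [show m+1+5 = ((((m+1)+1)+1)+1)+2 from rfl]
        rw [Finset.sum_range_succ, Finset.sum_range_succ, Finset.sum_range_succ,
            Finset.sum_range_succ, Finset.sum_range_succ, hz]
        have key := Wsum4 (x - ((m:ℝ)+2)) (by linarith) (by linarith)
        have h5 : W (x - ((m:ℝ)+5)) = 0 := W_zero_le _ (by linarith)
        push_cast
        ring_nf at key h5 ⊢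
        linarith [key, h5]

/-- The moving least-squares approximation of order `l = 1` with weight `W`
for the data `{(i, f i) : i = 0, …, n + 4}` coincides with the cubic uniform
B-spline curve: for `1 < x < n − 1`, the weighted least-squares error
`p ↦ ∑_{i=0}^{n+4} W (x − i) (p − f i)²` has the unique minimizer
`p* = ∑_{i=0}^{n} B i 4 (x + 2) · f i`. -/
theorem bspline_is_mls_minimizer (n : ℕ) (hn : 3 ≤ n) (f : ℝ → ℝ)
    (x : ℝ) (h1 : 1 < x) (h2 : x < (n : ℝ) - 1)
    (Q : ℝ → ℝ)
    (hQ : Q = fun p => ∑ i ∈ Finset.range (n + 5), W (x - i) * (p - f i) ^ 2)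
    (pstar : ℝ)
    (hpstar : pstar = ∑ i ∈ Finset.range (n + 1), B i 4 (x + 2) * f i) :
    ∀ p : ℝ, p ≠ pstar → Q pstar < Q p := by
  have hS0 : ∑ i ∈ Finset.range (n+5), W (x - i) = 1 := sumW x h1 n (by linarith)
  have hS1 : ∑ i ∈ Finset.range (n+5), W (x - i) * f i = pstar := by
    rw [hpstar]
    have e : ∑ i ∈ Finset.range (n+1), B i 4 (x+2) * f i
        = ∑ i ∈ Finset.range (n+1), W (x - i) * f i :=
      Finset.sum_congr rfl fun i _ => by
        rw [B4, show x + 2 - (i:ℝ) - 2 = x - i by ring]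
    rw [e, show n+5 = ((((n+1)+1)+1)+1)+1 from rfl,
        Finset.sum_range_succ, Finset.sum_range_succ, Finset.sum_range_succ,
        Finset.sum_range_succ]
    rw [W_zero_le (x - ((n+1 : ℕ):ℝ)) (by push_cast; linarith),
        W_zero_le (x - (((n+1)+1 : ℕ):ℝ)) (by push_cast; linarith),
        W_zero_le (x - ((((n+1)+1)+1 : ℕ):ℝ)) (by push_cast; linarith),
        W_zero_le (x - (((((n+1)+1)+1)+1 : ℕ):ℝ)) (by push_cast; linarith)]
    ring
  have key : ∀ p : ℝ, Q p = p^2 - 2*p*pstar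
      + ∑ i ∈ Finset.range (n+5), W (x - i) * f i ^ 2 := by
    intro p
    rw [hQ]
    simp only
    have e : ∀ i ∈ Finset.range (n+5),
        W (x - i) * (p - f i) ^ 2
          = p^2 * W (x - i) - 2*p*(W (x - i) * f i) + W (x - i) * f i ^ 2 := by
      intros; ring
    rw [Finset.sum_congr rfl e, Finset.sum_add_distrib, Finset.sum_sub_distrib,
        ← Finset.mul_sum, ← Finset.mul_sum, hS0, hS1]
    ring
  intro p hp
  rw [key p, key pstar]
  have hne : p - pstar ≠ 0 := sub_ne_zero.mpr hp
  have hpos : 0 < (p - pstar)^2 := by positivity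
  nlinarith [hpos]
end

section
/- Let r ≥ 1 and n ≥ r − 1 be integers and f : ℝ → ℝ any function. For every real t with r − 1 < t < n + 1, the function p ↦ Σ_{i=0}^{n} B_{0,r}(t − i)·(p − f(i))² of the real variable p has a unique minimizer p* ∈ ℝ, and p* equals the B-spline value Σ_{i=0}^{n} B_{i,r}(t)·f(i); that is, every uniform B-spline curve of order r is, at each parameter value, the minimizer of a positive quadratic moving least-squares error whose weight function is the translate-invariant basis function W(s) = B_{0,r}(s). -/
lemma B_support : ∀ (j i : ℕ) (t : ℝ), (t < i ∨ (i : ℝ) + j ≤ t) → B i j t = 0 := by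
  intro j
  induction j with
  | zero => intro i t _; rfl
  | succ j ih =>
    match j, ih with
    | 0, _ =>
      intro i t h
      simp only [B, ite_eq_right_iff, one_ne_zero]
      rintro ⟨h1, h2⟩
      rcases h with h | h
      · linarith
      · push_cast at h; linarith
    | j+1, ih =>
      intro i t h
      show ((t - (i : ℝ)) / ((j : ℝ) + 1)) * B i (j+1) t
        + (((i : ℝ) + ((j : ℝ) + 2) - t) / ((j : ℝ) + 1)) * B (i+1) (j+1) t = 0
      rw [ih i t, ih (i+1) t] <;> push_cast <;> push_cast at h
      · ring
      · rcases h with h | h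
        · left; linarith
        · right; linarith
      · rcases h with h | h
        · left; linarith
        · right; linarith

lemma B_translate : ∀ (j i : ℕ) (t : ℝ), B i j t = B 0 j (t - i) := by
  intro j
  induction j with
  | zero => intro i t; rfl
  | succ j ih =>
    match j, ih with
    | 0, _ =>
      intro i t
      simp only [B]
      congr 1
      simp only [eq_iff_iff, Nat.cast_zero]
      constructor <;> rintro ⟨a, b⟩ <;> constructor <;> linarith
    | j+1, ih =>
      intro i t
      show ((t - (i : ℝ)) / ((j : ℝ) + 1)) * B i (j+1) t
        + (((i : ℝ) + ((j : ℝ) + 2) - t) / ((j : ℝ) + 1)) * B (i+1) (j+1) t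
        = ((t - (i:ℝ) - (0 : ℕ)) / ((j : ℝ) + 1)) * B 0 (j+1) (t - i)
        + (((0:ℕ) + ((j : ℝ) + 2) - (t - i)) / ((j : ℝ) + 1)) * B 1 (j+1) (t - i)
      rw [ih i t, ih (i+1) t, ih 1 (t - i)]
      push_cast
      ring_nf

lemma B_partition : ∀ (j m : ℕ) (t : ℝ), (j : ℝ) < t → t < (m : ℝ) + 1 →
    ∑ i ∈ Finset.range (m + 1), B i (j + 1) t = 1 := by
  intro j
  induction j with
  | zero =>
    intro m t ht hm
    have h0 : (0 : ℝ) < t := by exact_mod_cast ht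
    set k := ⌊t⌋.toNat with hk
    have hkf : ((k : ℤ) : ℝ) = (⌊t⌋ : ℝ) := by
      exact_mod_cast congrArg (fun z : ℤ => (z : ℝ)) (Int.toNat_of_nonneg (Int.floor_nonneg.2 h0.le))
    have hkr : (k : ℝ) = (⌊t⌋ : ℝ) := by exact_mod_cast hkf
    have hk1 : (k : ℝ) ≤ t := by rw [hkr]; exact Int.floor_le t
    have hk2 : t < (k : ℝ) + 1 := by rw [hkr]; exact Int.lt_floor_add_one t
    have hkm : k < m + 1 := by
      by_contra h
      push_neg at h
      have : ((m : ℝ) + 1) ≤ (k : ℝ) := by exact_mod_cast h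
      linarith
    rw [Finset.sum_eq_single_of_mem k (Finset.mem_range.2 hkm)]
    · show (if (k : ℝ) ≤ t ∧ t < (k : ℝ) + 1 then (1:ℝ) else 0) = 1
      rw [if_pos ⟨hk1, hk2⟩]
    · intro i _ hik
      simp only [B, ite_eq_right_iff, one_ne_zero]
      rintro ⟨a, b⟩
      apply hik
      have : (i : ℤ) = ⌊t⌋ := by
        symm; rw [Int.floor_eq_iff]; constructor <;> push_cast <;> [exact a; exact b]
      omega
  | succ j ih =>
    intro m t ht hm
    have hj : (0:ℝ) < (j : ℝ) + 1 := by positivity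
    have step : ∀ i ∈ Finset.range (m + 1),
        B i (j + 2) t = ((t - (i : ℝ)) / ((j : ℝ) + 1)) * B i (j+1) t
          + (((i : ℝ) + ((j : ℝ) + 2) - t) / ((j : ℝ) + 1)) * B (i+1) (j+1) t := by
      intro i _; rfl
    rw [Finset.sum_congr rfl step, Finset.sum_add_distrib]
    set g : ℕ → ℝ := fun i => (((i : ℝ) + ((j : ℝ) + 1) - t) / ((j : ℝ) + 1)) * B i (j+1) t with hg
    have hB0 : B 0 (j+1) t = 0 := B_support (j+1) 0 t (Or.inr (by push_cast; push_cast at ht; linarith))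
    have hBm : B (m+1) (j+1) t = 0 := B_support (j+1) (m+1) t (Or.inl (by push_cast; linarith))
    have reindex : ∑ i ∈ Finset.range (m + 1),
        (((i : ℝ) + ((j : ℝ) + 2) - t) / ((j : ℝ) + 1)) * B (i+1) (j+1) t
        = ∑ i ∈ Finset.range (m + 1), g i := by
      have h1 : ∑ i ∈ Finset.range (m + 2), g i = ∑ i ∈ Finset.range (m+1), g (i+1) + g 0 :=
        Finset.sum_range_succ' g (m+1)
      have h2 : ∑ i ∈ Finset.range (m + 2), g i = ∑ i ∈ Finset.range (m+1), g i + g (m+1) :=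
        Finset.sum_range_succ g (m+1)
      have hg0 : g 0 = 0 := by simp [hg, hB0]
      have hgm : g (m+1) = 0 := by simp [hg, hBm]
      rw [hg0, add_zero] at h1
      rw [hgm, add_zero] at h2
      have h3 : ∑ i ∈ Finset.range (m + 1),
          (((i : ℝ) + ((j : ℝ) + 2) - t) / ((j : ℝ) + 1)) * B (i+1) (j+1) t
          = ∑ i ∈ Finset.range (m + 1), g (i+1) := by
        apply Finset.sum_congr rfl
        intro i _
        simp only [hg]
        push_cast
        ring_nf
      rw [h3, ← h1, h2]
    rw [reindex, ← Finset.sum_add_distrib]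
    have : ∀ i ∈ Finset.range (m+1),
        ((t - (i : ℝ)) / ((j : ℝ) + 1)) * B i (j+1) t + g i = B i (j+1) t := by
      intro i _
      simp only [hg]
      field_simp
      ring
    rw [Finset.sum_congr rfl this]
    exact ih m t (by push_cast at ht ⊢; linarith) hm

/-- Every uniform B-spline curve of order `r` is, at each parameter value
`t ∈ (r − 1, n + 1)`, the unique minimizer of the positive quadratic moving
least-squares error with the translate-invariant weight `W s = B 0 r s`:
the error `p ↦ ∑_{i=0}^{n} B 0 r (t − i) (p − f i)²` is uniquely minimized by
`p* = ∑_{i=0}^{n} B i r t · f i`. -/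
theorem bspline_curve_minimizes_quadratic (r n : ℕ) (hr : 1 ≤ r)
    (hn : r - 1 ≤ n) (f : ℝ → ℝ) (t : ℝ)
    (h1 : (r : ℝ) - 1 < t) (h2 : t < (n : ℝ) + 1)
    (Q : ℝ → ℝ)
    (hQ : Q = fun p => ∑ i ∈ Finset.range (n + 1), B 0 r (t - i) * (p - f i) ^ 2)
    (pstar : ℝ)
    (hpstar : pstar = ∑ i ∈ Finset.range (n + 1), B i r t * f i) :
    ∀ p : ℝ, p ≠ pstar → Q pstar < Q p := by
  obtain ⟨j, rfl⟩ : ∃ j, r = j + 1 := ⟨r - 1, by omega⟩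
  have hS : ∑ i ∈ Finset.range (n + 1), B i (j+1) t = 1 :=
    B_partition j n t (by push_cast at h1 ⊢; linarith) h2
  have hQ' : ∀ p, Q p = (∑ i ∈ Finset.range (n + 1), B i (j+1) t) * p ^ 2
      - 2 * p * (∑ i ∈ Finset.range (n + 1), B i (j+1) t * f i)
      + ∑ i ∈ Finset.range (n + 1), B i (j+1) t * (f i) ^ 2 := by
    intro p
    rw [hQ]
    simp only
    rw [Finset.sum_mul, Finset.mul_sum, ← Finset.sum_sub_distrib, ← Finset.sum_add_distrib]
    apply Finset.sum_congr rfl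
    intro i _
    rw [← B_translate (j+1) i t]
    ring
  intro p hp
  have hne : p - pstar ≠ 0 := sub_ne_zero.2 hp
  have h : 0 < (p - pstar) ^ 2 := by positivity
  have e1 := hQ' p
  have e2 := hQ' pstar
  rw [hS] at e1 e2
  rw [← hpstar] at e1 e2
  nlinarith [h]
end
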